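/- Let R ⊆ ℤ \ {0} be a finite set, let d ≥ 2, and let R^d = ⋃_{i=1}^d ({0}^{i−1} × R × {0}^{d−i}) ⊆ ℤ^d \ {0} be the axial product recovery set. Then for every finite alphabet Q with |Q| = q and every one-dimensional R-recoverable system X ⊆ Q^ℤ, there exists an R^d-recoverable system Y ⊆ Q^{ℤ^d} on ℤ^d with R_q(Y) = R_q(X) (Y is obtained by stacking: y_{(i₁,...,i_d)} depends only on i_d and runs over independent copies of words of X along the last coordinate). Consequently, the supremum of rates of R^d-recoverable systems over alphabets of size q is at least the supremum of rates of R-recoverable systems over alphabets of size q. -/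

import Mathlib

/-- An `R`-recoverable system on `ℤ`. -/
def IsRecoverable {Q : Type*} (R : Set ℤ) (X : Set (ℤ → Q)) : Prop :=
  ∀ i : ℤ, ∃ f : (ℤ → Q) → Q,
    (∀ x y : ℤ → Q, (∀ j ∈ R, x (i + j) = y (i + j)) → f x = f y) ∧
    ∀ x ∈ X, f x = x i

/-- `|B_n(X)|` for a one-dimensional system. -/
noncomputable def blockCount {Q : Type*} (X : Set (ℤ → Q)) (n : ℕ) : ℕ :=
  Nat.card ↥((fun x : ℤ → Q => fun i : Fin n => x ((i : ℕ) : ℤ)) '' X)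

/-- The rate of a one-dimensional system. -/
noncomputable def rate (q : ℕ) {Q : Type*} (X : Set (ℤ → Q)) : ℝ :=
  Filter.limsup (fun n : ℕ => Real.logb q (blockCount X n) / n) Filter.atTop

/-- An `S`-recoverable system on `ℤ^d`. -/
def IsRecoverableD {Q : Type*} {d : ℕ} (S : Set (Fin d → ℤ))
    (X : Set ((Fin d → ℤ) → Q)) : Prop :=
  ∀ v : Fin d → ℤ, ∃ f : ((Fin d → ℤ) → Q) → Q,
    (∀ x y : (Fin d → ℤ) → Q, (∀ u ∈ S, x (v + u) = y (v + u)) → f x = f y) ∧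
    ∀ x ∈ X, f x = x v

/-- `|B_{[n]^d}(Y)|` for a `d`-dimensional system. -/
noncomputable def blockCountD {Q : Type*} {d : ℕ} (Y : Set ((Fin d → ℤ) → Q)) (n : ℕ) : ℕ :=
  Nat.card ↥((fun x : (Fin d → ℤ) → Q =>
    fun w : Fin d → Fin n => x (fun i => ((w i : ℕ) : ℤ))) '' Y)

/-- The rate of a `d`-dimensional system. -/
noncomputable def rateD (q : ℕ) {Q : Type*} {d : ℕ} (Y : Set ((Fin d → ℤ) → Q)) : ℝ :=
  Filter.limsup (fun n : ℕ => Real.logb q (blockCountD Y n) / ((n ^ d : ℕ) : ℝ)) Filter.atTop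

/-- The axial-product recovery set `R^d = ⋃_i {0}^{i−1} × R × {0}^{d−i}`. -/
def axialSet (R : Set ℤ) (d : ℕ) : Set (Fin d → ℤ) :=
  {u | ∃ i : Fin d, u i ∈ R ∧ ∀ j : Fin d, j ≠ i → u j = 0}

/-- The stacked system. -/
def stacked {Q : Type*} {m : ℕ} (X : Set (ℤ → Q)) : Set ((Fin (m + 1) → ℤ) → Q) :=
  {y | ∀ a : Fin m → ℤ, (fun t : ℤ => y (Fin.cons t a)) ∈ X}

lemma stacked_recoverable {Q : Type*} {R : Set ℤ} {m : ℕ} {X : Set (ℤ → Q)}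
    (hX : IsRecoverable R X) :
    IsRecoverableD (axialSet R (m + 1)) (stacked X) := by
  intro v
  obtain ⟨f, hf1, hf2⟩ := hX (v 0)
  refine ⟨fun y => f (fun t => y (Fin.cons t (Fin.tail v))), ?_, ?_⟩
  · intro x y h
    apply hf1
    intro j hj
    have hu : (Fin.cons j (0 : Fin m → ℤ)) ∈ axialSet R (m + 1) := by
      refine ⟨0, by simpa using hj, fun k hk => ?_⟩
      obtain ⟨k', rfl⟩ := Fin.eq_succ_of_ne_zero hk
      simp
    have hv : v + Fin.cons j (0 : Fin m → ℤ) = Fin.cons (v 0 + j) (Fin.tail v) := by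
      funext k
      refine Fin.cases ?_ (fun k' => ?_) k <;> simp [Fin.tail]
    have := h _ hu
    rw [hv] at this
    simpa using this
  · intro y hy
    have hs := hy (Fin.tail v)
    have := hf2 _ hs
    simpa [Fin.cons_self_tail] using this

lemma stacked_blockCountD {Q : Type*} {m : ℕ} (X : Set (ℤ → Q)) (n : ℕ) (hn : 0 < n) :
    blockCountD (stacked (m := m) X) n = blockCount X n ^ n ^ m := by
  classical
  set C : Set (Fin n → Q) := (fun x : ℤ → Q => fun i : Fin n => x ((i : ℕ) : ℤ)) '' X with hC
  set D : Set ((Fin (m + 1) → Fin n) → Q) :=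
    (fun x : (Fin (m + 1) → ℤ) → Q =>
      fun w : Fin (m + 1) → Fin n => x (fun i => ((w i : ℕ) : ℤ))) '' (stacked X) with hD
  have key : Nat.card ↥D = Nat.card ((Fin m → Fin n) → ↥C) := by
    refine Nat.card_eq_of_bijective
      (fun b => fun w => ⟨fun t => (b : (Fin (m + 1) → Fin n) → Q) (Fin.cons t w), ?_⟩) ⟨?_, ?_⟩
    · -- each row is in C
      obtain ⟨b, hb⟩ := b
      obtain ⟨y, hy, rfl⟩ := hb
      refine ⟨fun t : ℤ => y (Fin.cons t (fun i => ((w i : ℕ) : ℤ))), hy _, ?_⟩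
      funext t
      simp only
      congr 1
      funext k
      refine Fin.cases ?_ (fun k' => ?_) k <;> simp
    · -- injective
      rintro ⟨b, hb⟩ ⟨b', hb'⟩ h
      ext w
      have := congrFun h (Fin.tail w)
      have h2 := congrArg Subtype.val this
      have h3 := congrFun h2 (w 0)
      simpa [Fin.cons_self_tail] using h3
    · -- surjective
      intro g
      choose x hxX hxval using fun w : Fin m → Fin n => (g w).2
      set π : (Fin m → ℤ) → (Fin m → Fin n) := fun a i =>
        if h : (a i).toNat < n then ⟨(a i).toNat, h⟩ else ⟨0, hn⟩ with hπ
      have hπcast : ∀ w : Fin m → Fin n, π (fun i => ((w i : ℕ) : ℤ)) = w := by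
        intro w
        funext i
        simp only [hπ, Int.toNat_natCast]
        rw [dif_pos (w i).isLt]
      set y : (Fin (m + 1) → ℤ) → Q := fun v => x (π (Fin.tail v)) (v 0) with hy
      have hyY : y ∈ stacked (m := m) X := by
        intro a
        have : (fun t : ℤ => y (Fin.cons t a)) = x (π a) := by
          funext t
          simp [hy, Fin.tail_cons]
        rw [this]
        exact hxX _
      refine ⟨⟨_, ⟨y, hyY, rfl⟩⟩, ?_⟩
      funext w
      ext t
      simp only
      have hcast : (fun i : Fin (m + 1) => (((Fin.cons t w : Fin (m + 1) → Fin n) i : ℕ) : ℤ)) =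
          Fin.cons ((t : ℕ) : ℤ) (fun i => ((w i : ℕ) : ℤ)) := by
        funext k
        rcases Fin.eq_zero_or_eq_succ k with rfl | ⟨k', rfl⟩ <;> simp
      rw [hcast]
      show y _ = _
      rw [hy]
      simp only [Fin.tail_cons, Fin.cons_zero, hπcast]
      have := congrFun (hxval w) t
      exact this
  have hcardfun : Nat.card ((Fin m → Fin n) → ↥C) = Nat.card ↥C ^ n ^ m := by
    rw [Nat.card_fun]
    congr 1
    simp [Nat.card_eq_fintype_card]
  show Nat.card ↥D = Nat.card ↥C ^ n ^ m
  rw [key, hcardfun]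

lemma stacked_rateD {Q : Type*} {m : ℕ} (X : Set (ℤ → Q)) (q : ℕ) :
    rateD q (stacked (m := m) X) = rate q X := by
  refine Filter.limsup_congr ?_
  filter_upwards [Filter.eventually_ge_atTop 1] with n hn
  rw [stacked_blockCountD X n hn]
  have hn0 : (n:ℝ) ≠ 0 := by
    have : (0:ℝ) < n := by exact_mod_cast hn
    positivity
  push_cast
  rw [Real.logb_pow]
  push_cast
  rw [pow_succ]
  field_simp

lemma rateD_le_one {Q : Type*} [Fintype Q] {q : ℕ} (hq : 2 ≤ q) (hQ : Fintype.card Q = q)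
    {d : ℕ} (Y : Set ((Fin d → ℤ) → Q)) : rateD q Y ≤ 1 := by
  have hq1 : (1 : ℝ) < q := by exact_mod_cast hq
  have hnonneg : ∀ n : ℕ, 0 ≤ Real.logb q (blockCountD Y n) / ((n ^ d : ℕ) : ℝ) := by
    intro n
    apply div_nonneg _ (by positivity)
    rcases Nat.eq_zero_or_pos (blockCountD Y n) with h | h
    · simp [h]
    · exact Real.logb_nonneg hq1 (by exact_mod_cast h)
  refine Filter.limsup_le_of_le (Filter.isCoboundedUnder_le_of_le _ hnonneg) ?_
  filter_upwards [Filter.eventually_ge_atTop 1] with n hn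
  have hcardle : blockCountD Y n ≤ q ^ n ^ d := by
    have h1 : blockCountD Y n ≤ Nat.card ((Fin d → Fin n) → Q) :=
      Nat.card_le_card_of_injective Subtype.val Subtype.val_injective
    calc blockCountD Y n ≤ Nat.card ((Fin d → Fin n) → Q) := h1
      _ = q ^ n ^ d := by
          rw [Nat.card_fun, Nat.card_eq_fintype_card, Nat.card_eq_fintype_card, hQ]
          simp
  have hpos : (0:ℝ) < (n:ℝ) ^ d := by
    have : (0:ℝ) < n := by exact_mod_cast hn
    positivity
  rw [div_le_one (by exact_mod_cast (by positivity : (0:ℝ) < ((n ^ d : ℕ) : ℝ)))]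
  rcases Nat.eq_zero_or_pos (blockCountD Y n) with h | h
  · have : (0:ℝ) ≤ ((n ^ d : ℕ) : ℝ) := by positivity
    simpa [h] using this
  · calc Real.logb q (blockCountD Y n) ≤ Real.logb q ((q : ℝ) ^ n ^ d) := by
          apply Real.logb_le_logb_of_le hq1 (by exact_mod_cast h)
          exact_mod_cast hcardle
      _ = ((n ^ d : ℕ) : ℝ) := by
          rw [Real.logb_pow, Real.logb_self_eq_one hq1]
          push_cast
          ring

/-- Stacking a one-dimensional `R`-recoverable system along one coordinate of
`ℤ^d` yields an `R^d`-recoverable system of the same rate; consequently the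
supremum of rates of `R^d`-systems is at least that of `R`-systems. -/
theorem stmt12 (R : Set ℤ) (hRfin : R.Finite) (hR0 : (0 : ℤ) ∉ R)
    (d : ℕ) (hd : 2 ≤ d) (q : ℕ) (hq : 2 ≤ q)
    (Q : Type*) [Fintype Q] (hQ : Fintype.card Q = q)
    (X : Set (ℤ → Q)) (hX : IsRecoverable R X) :
    (∃ Y : Set ((Fin d → ℤ) → Q), IsRecoverableD (axialSet R d) Y ∧ rateD q Y = rate q X) ∧
    sSup {x : ℝ | ∃ X' : Set (ℤ → Q), IsRecoverable R X' ∧ rate q X' = x} ≤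
      sSup {x : ℝ | ∃ Y : Set ((Fin d → ℤ) → Q),
        IsRecoverableD (axialSet R d) Y ∧ rateD q Y = x} := by
  obtain ⟨m, rfl⟩ : ∃ m, d = m + 1 := ⟨d - 1, by omega⟩
  have main : ∀ X' : Set (ℤ → Q), IsRecoverable R X' →
      ∃ Y : Set ((Fin (m + 1) → ℤ) → Q),
        IsRecoverableD (axialSet R (m + 1)) Y ∧ rateD q Y = rate q X' := by
    intro X' hX'
    exact ⟨stacked X', stacked_recoverable hX', stacked_rateD X' q⟩
  refine ⟨main X hX, ?_⟩
  apply csSup_le_csSup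
  · exact ⟨1, fun x ⟨Y, _, hY⟩ => hY ▸ rateD_le_one hq hQ Y⟩
  · exact ⟨rate q X, X, hX, rfl⟩
  · rintro x ⟨X', hX', rfl⟩
    obtain ⟨Y, hY1, hY2⟩ := main X' hX'
    exact ⟨Y, hY1, hY2⟩
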